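/- Let γ : [s,s'] → ℝ^r (r ≥ 2) be Lipschitz with |γ'| = 1 a.e. Define Exc(γ) := inf over unit vectors v of (⨍_s^{s'} ⟨v, γ'(t)⟩² dt)^{1/2}. Then (s'-s)·Exc(γ)² ≤ 2((s'-s) - |γ(s')-γ(s)|). -/

import Mathlib

open MeasureTheory Set Filter intervalIntegral
open scoped RealInnerProductSpace

lemma lip_ftc {K : NNReal} {f : ℝ → ℝ} (hf : LipschitzWith K f) {a b : ℝ} (hab : a ≤ b) :
    f b - f a = ∫ t in a..b, deriv f t := by
  set h : ℕ → ℝ := fun n => ((n : ℝ) + 1)⁻¹ with hh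
  have hpos : ∀ n, 0 < h n := fun n => by positivity
  have hcont : Continuous f := hf.continuous
  have hint : ∀ u v : ℝ, IntervalIntegrable f volume u v := fun u v =>
    hcont.intervalIntegrable u v
  have htend0 : Tendsto h atTop (nhds 0) := by
    simpa [hh, one_div] using tendsto_one_div_add_atTop_nhds_zero_nat (𝕜 := ℝ)
  set g : ℕ → ℝ → ℝ := fun n t => (f (t + h n) - f t) / h n with hg
  -- Step A: integral of g n as boundary terms
  have stepA : ∀ n, ∫ t in a..b, g n t =
      ((∫ t in b..(b + h n), f t) - ∫ t in a..(a + h n), f t) / h n := by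
    intro n
    have h1 : ∫ t in a..b, (f (t + h n) - f t) =
        (∫ t in b..(b + h n), f t) - ∫ t in a..(a + h n), f t := by
      have hint2 : IntervalIntegrable (fun t => f (t + h n)) volume a b :=
        (hcont.comp (by continuity)).intervalIntegrable _ _
      rw [intervalIntegral.integral_sub hint2 (hint a b),
        intervalIntegral.integral_comp_add_right f (h n)]
      have e1 := intervalIntegral.integral_add_adjacent_intervals (μ := volume) (f := f)
        (hint a (a + h n)) (hint (a + h n) (b + h n))
      have e2 := intervalIntegral.integral_add_adjacent_intervals (μ := volume) (f := f)
        (hint a b) (hint b (b + h n))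
      linarith
    calc ∫ t in a..b, g n t = (∫ t in a..b, (f (t + h n) - f t)) / h n := by
          rw [← intervalIntegral.integral_div]
      _ = _ := by rw [h1]
  -- boundary limits
  have bdry : ∀ c : ℝ, Tendsto (fun n => (∫ t in c..(c + h n), f t) / h n) atTop (nhds (f c)) := by
    intro c
    have hD : HasDerivAt (fun u => ∫ t in c..u, f t) (f c) c :=
      intervalIntegral.integral_hasDerivAt_right (hint c c)
        (hcont.stronglyMeasurableAtFilter _ _) hcont.continuousAt
    have hslope := hasDerivAt_iff_tendsto_slope.1 hD
    have hseq : Tendsto (fun n => c + h n) atTop (nhdsWithin c {c}ᶜ) := by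
      apply tendsto_nhdsWithin_of_tendsto_nhds_of_eventually_within
      · simpa using tendsto_const_nhds.add htend0
      · exact Eventually.of_forall fun n => by
          simp only [mem_compl_iff, mem_singleton_iff]
          have := hpos n; intro hc; nlinarith [hpos n]
    have := hslope.comp hseq
    have heq : (fun n => slope (fun u => ∫ t in c..u, f t) c (c + h n)) =
        fun n => (∫ t in c..(c + h n), f t) / h n := by
      funext n
      rw [slope_def_field]
      simp [intervalIntegral.integral_same]
    rw [Function.comp_def, heq] at this
    exact this
  have lim1 : Tendsto (fun n => ∫ t in a..b, g n t) atTop (nhds (f b - f a)) := by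
    have := ((bdry b).sub (bdry a))
    apply this.congr
    intro n
    rw [stepA n, sub_div]
  -- Step C: dominated convergence
  have hgmeas : ∀ n, AEStronglyMeasurable (g n) (volume.restrict (Ioc a b)) := by
    intro n
    exact (((hcont.comp (by continuity)).sub hcont).div_const _).aestronglyMeasurable
  have hbound : ∀ n, ∀ᵐ t ∂(volume.restrict (Ioc a b)), ‖g n t‖ ≤ (K : ℝ) := by
    intro n
    refine Eventually.of_forall fun t => ?_
    have hd := hf.dist_le_mul (t + h n) t
    rw [Real.dist_eq, Real.dist_eq] at hd
    have h0 := hpos n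
    rw [hg]
    simp only [norm_div, Real.norm_eq_abs]
    rw [abs_of_pos h0, div_le_iff₀ h0]
    calc |f (t + h n) - f t| ≤ K * |t + h n - t| := hd
      _ = K * h n := by rw [show t + h n - t = h n by ring, abs_of_pos h0]
  have hK : Integrable (fun _ : ℝ => (K : ℝ)) (volume.restrict (Ioc a b)) := by
    exact integrableOn_const measure_Ioc_lt_top.ne
  have hlim : ∀ᵐ t ∂(volume.restrict (Ioc a b)),
      Tendsto (fun n => g n t) atTop (nhds (deriv f t)) := by
    have hae : ∀ᵐ t ∂(volume.restrict (Ioc a b)), DifferentiableAt ℝ f t :=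
      ae_restrict_of_ae hf.ae_differentiableAt_real
    filter_upwards [hae] with t ht
    have hD := ht.hasDerivAt
    have hslope := hasDerivAt_iff_tendsto_slope.1 hD
    have hseq : Tendsto (fun n => t + h n) atTop (nhdsWithin t {t}ᶜ) := by
      apply tendsto_nhdsWithin_of_tendsto_nhds_of_eventually_within
      · simpa using tendsto_const_nhds.add htend0
      · exact Eventually.of_forall fun n => by
          simp only [mem_compl_iff, mem_singleton_iff]
          intro hc; nlinarith [hpos n]
    have := hslope.comp hseq
    apply this.congr
    intro n
    simp only [Function.comp_apply, slope_def_field]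
    rw [hg]
    simp [show t + h n - t = h n by ring]
  have lim2 := MeasureTheory.tendsto_integral_of_dominated_convergence
    (fun _ => (K : ℝ)) hgmeas hK hbound hlim
  have conv : ∀ n, ∫ t in a..b, g n t = ∫ t in Ioc a b, g n t := fun n =>
    intervalIntegral.integral_of_le hab
  rw [intervalIntegral.integral_of_le hab]
  refine tendsto_nhds_unique lim1 ?_
  apply lim2.congr
  intro n
  exact (conv n).symm

lemma exists_unit_orth {r : ℕ} (hr : 2 ≤ r) (w : EuclideanSpace ℝ (Fin r)) :
    ∃ v : EuclideanSpace ℝ (Fin r), ‖v‖ = 1 ∧ ⟪v, w⟫ = 0 := by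
  set S := (Submodule.span ℝ {w})ᗮ with hS
  have hfin : 1 ≤ Module.finrank ℝ S := by
    rw [hS]
    have htot := Submodule.finrank_add_finrank_orthogonal (Submodule.span ℝ {w})
    have hE : Module.finrank ℝ (EuclideanSpace ℝ (Fin r)) = r := by
      simp [finrank_euclideanSpace]
    have hsp : Module.finrank ℝ (Submodule.span ℝ {w}) ≤ 1 := by
      by_cases hw : w = 0
      · subst hw
        rw [Submodule.span_zero_singleton, finrank_bot]
        omega
      · rw [finrank_span_singleton hw]
    omega
  obtain ⟨x, hxS, hx0⟩ : ∃ x ∈ S, x ≠ 0 := by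
    by_contra hcon
    push_neg at hcon
    have : S = ⊥ := by
      ext y; simp only [Submodule.mem_bot]
      exact ⟨fun hy => hcon y hy, fun hy => hy ▸ S.zero_mem⟩
    rw [this] at hfin
    simp at hfin
  refine ⟨‖x‖⁻¹ • x, ?_, ?_⟩
  · rw [norm_smul, norm_inv, norm_norm, inv_mul_cancel₀ (norm_ne_zero_iff.2 hx0)]
  · have hxw : ⟪x, w⟫ = 0 :=
      (Submodule.mem_orthogonal' _ x).1 hxS w (Submodule.mem_span_singleton_self w)
    show inner ℝ (‖x‖⁻¹ • x) w = (0:ℝ)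
    rw [real_inner_smul_left, hxw, mul_zero]

lemma key_ineq {E : Type*} [NormedAddCommGroup E] [InnerProductSpace ℝ E]
    (u v w : E) (hu : ‖u‖ = 1) (hv : ‖v‖ = 1) (hw : ‖w‖ ≤ 1) (hvw : ⟪v, w⟫ = 0) :
    ⟪v, u⟫ ^ 2 ≤ 2 * (1 - ⟪w, u⟫) := by
  set a := ⟪v, u⟫
  set b := ⟪w, u⟫
  have hb : |b| ≤ 1 := by
    calc |b| ≤ ‖w‖ * ‖u‖ := abs_real_inner_le_norm w u
      _ ≤ 1 := by rw [hu]; simpa using hw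
  have hexp : (0:ℝ) ≤ ⟪u - a • v - b • w, u - a • v - b • w⟫ := real_inner_self_nonneg
  have hww : ⟪w, w⟫ ≤ 1 := by
    rw [real_inner_self_eq_norm_sq]; nlinarith [norm_nonneg w]
  simp only [inner_sub_left, inner_sub_right, real_inner_smul_left, real_inner_smul_right] at hexp
  rw [real_inner_self_eq_norm_sq u, hu] at hexp
  rw [real_inner_self_eq_norm_sq v, hv] at hexp
  have hcomm1 : ⟪u, v⟫ = a := (real_inner_comm u v).symm
  have hcomm2 : ⟪u, w⟫ = b := (real_inner_comm u w).symm
  have hcomm3 : ⟪w, v⟫ = 0 := by rw [real_inner_comm]; exact hvw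
  rw [hcomm1, hcomm2, hcomm3, hvw] at hexp
  have hb2 : (0:ℝ) ≤ b ^ 2 := sq_nonneg b
  nlinarith [abs_le.1 hb]

set_option maxHeartbeats 1000000 in
/-- For a Lipschitz curve `γ : [s,s'] → ℝ^r` (`r ≥ 2`) with `‖γ'‖ = 1` a.e.,
the excess `Exc(γ) := ⨅_{v ∈ S^{r-1}} (⨍_s^{s'} ⟪v, γ'⟫² dt)^{1/2}` satisfies
`(s'-s) · Exc(γ)² ≤ 2 ((s'-s) - ‖γ s' - γ s‖)`. -/
theorem stmt_1 (r : ℕ) (hr : 2 ≤ r) (γ : ℝ → EuclideanSpace ℝ (Fin r)) (s s' : ℝ)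
    (hss : s < s') (K : NNReal) (hlip : LipschitzWith K γ)
    (harc : ∀ᵐ t ∂(volume.restrict (Set.Ioo s s')), ‖deriv γ t‖ = 1) :
    (s' - s) *
      (⨅ v : Metric.sphere (0 : EuclideanSpace ℝ (Fin r)) 1,
        Real.sqrt ((s' - s)⁻¹ * ∫ t in s..s', (⟪(v : EuclideanSpace ℝ (Fin r)), deriv γ t⟫) ^ 2)) ^ 2
      ≤ 2 * ((s' - s) - ‖γ s' - γ s‖) := by
  have hL : (0:ℝ) < s' - s := sub_pos.2 hss
  set d : EuclideanSpace ℝ (Fin r) := γ s' - γ s with hd_def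
  set w : EuclideanSpace ℝ (Fin r) := ‖d‖⁻¹ • d with hw_def
  have hw_norm : ‖w‖ ≤ 1 := by
    by_cases hd : d = 0
    · simp [hw_def, hd]
    · rw [hw_def, norm_smul, norm_inv, norm_norm,
        inv_mul_cancel₀ (norm_ne_zero_iff.2 hd)]
  have hwd : ⟪w, d⟫ = ‖d‖ := by
    by_cases hd : d = 0
    · simp [hw_def, hd]
    · rw [hw_def, real_inner_smul_left, real_inner_self_eq_norm_sq]
      have h0 : ‖d‖ ≠ 0 := norm_ne_zero_iff.2 hd
      field_simp
  obtain ⟨v, hv1, hvw⟩ := exists_unit_orth hr w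
  have harc' : ∀ᵐ t ∂(volume.restrict (Ioc s s')), ‖deriv γ t‖ = 1 := by
    rwa [← Measure.restrict_congr_set (Ioo_ae_eq_Ioc)]
  have hmeas : Measurable (deriv γ) := measurable_deriv γ
  set g : ℝ → ℝ := fun t => ⟪w, deriv γ t⟫ with hg_def
  have hg_cont : Continuous fun x : EuclideanSpace ℝ (Fin r) => ⟪w, x⟫ :=
    continuous_const.inner continuous_id
  have hgm : Measurable g := hg_cont.measurable.comp hmeas
  have hv_cont : Continuous fun x : EuclideanSpace ℝ (Fin r) => ⟪v, x⟫ :=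
    continuous_const.inner continuous_id
  have hconst : Integrable (fun _ : ℝ => (1:ℝ)) (volume.restrict (Ioc s s')) := by
    exact integrableOn_const measure_Ioc_lt_top.ne
  have hInt_g : Integrable g (volume.restrict (Ioc s s')) := by
    refine Integrable.mono' hconst hgm.aestronglyMeasurable ?_
    filter_upwards [harc'] with t ht
    calc ‖g t‖ = |⟪w, deriv γ t⟫| := rfl
      _ ≤ ‖w‖ * ‖deriv γ t‖ := abs_real_inner_le_norm _ _
      _ ≤ 1 := by rw [ht, mul_one]; exact hw_norm
  have hInt_sq : Integrable (fun t => ⟪v, deriv γ t⟫ ^ 2) (volume.restrict (Ioc s s')) := by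
    refine Integrable.mono' hconst
      ((hv_cont.measurable.comp hmeas).pow_const 2).aestronglyMeasurable ?_
    filter_upwards [harc'] with t ht
    have h1 : |⟪v, deriv γ t⟫| ≤ 1 := by
      calc |⟪v, deriv γ t⟫| ≤ ‖v‖ * ‖deriv γ t‖ := abs_real_inner_le_norm _ _
        _ = 1 := by rw [ht, hv1, mul_one]
    calc ‖⟪v, deriv γ t⟫ ^ 2‖ = |⟪v, deriv γ t⟫| ^ 2 := by
          rw [Real.norm_eq_abs, abs_pow, sq_abs, ← sq_abs]
      _ ≤ 1 := by nlinarith [abs_nonneg ⟪v, deriv γ t⟫]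
  have hInt_rhs : Integrable (fun t => 2 * (1 - g t)) (volume.restrict (Ioc s s')) :=
    ((hconst.sub hInt_g).const_mul 2)
  -- step 1 : pointwise inequality integrated
  have step1 : (∫ t in s..s', ⟪v, deriv γ t⟫ ^ 2) ≤ ∫ t in s..s', 2 * (1 - g t) := by
    rw [intervalIntegral.integral_of_le hss.le, intervalIntegral.integral_of_le hss.le]
    refine integral_mono_ae hInt_sq hInt_rhs ?_
    filter_upwards [harc'] with t ht
    exact key_ineq (deriv γ t) v w ht hv1 hw_norm hvw
  -- step 2 : compute the right-hand integral
  have hg_ii : IntervalIntegrable g volume s s' :=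
    (intervalIntegrable_iff_integrableOn_Ioc_of_le hss.le).2 hInt_g
  have step2 : (∫ t in s..s', 2 * (1 - g t)) = 2 * ((s' - s) - ∫ t in s..s', g t) := by
    rw [intervalIntegral.integral_const_mul,
      intervalIntegral.integral_sub intervalIntegrable_const hg_ii,
      intervalIntegral.integral_const]
    simp
  -- step 3 : FTC for the Lipschitz function t ↦ ⟪w, γ t⟫
  have step3 : (∫ t in s..s', g t) = ‖d‖ := by
    set f : ℝ → ℝ := fun t => ⟪w, γ t⟫ with hf_def
    have hfl : LipschitzWith (‖innerSL ℝ w‖₊ * K) f :=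
      ((innerSL ℝ w).lipschitz.comp hlip)
    have hftc := lip_ftc hfl hss.le
    have hcongr : (∫ t in s..s', deriv f t) = ∫ t in s..s', g t := by
      apply intervalIntegral.integral_congr_ae
      filter_upwards [hlip.ae_differentiableAt_real] with t ht _
      have hD := ht.hasDerivAt
      have hcomp := (innerSL ℝ w).hasFDerivAt.comp_hasDerivAt t hD
      have heq : (⇑(innerSL ℝ w) ∘ γ) = f := by
        funext u; simp [hf_def]
      rw [heq] at hcomp
      rw [hcomp.deriv]
      simp [hg_def]
    rw [hcongr] at hftc
    rw [← hftc, hf_def]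
    have : ⟪w, γ s'⟫ - ⟪w, γ s⟫ = ⟪w, d⟫ := by
      rw [hd_def, inner_sub_right]
    rw [this, hwd]
  have key : (∫ t in s..s', ⟪v, deriv γ t⟫ ^ 2) ≤ 2 * ((s' - s) - ‖d‖) := by
    rw [step3] at step2
    calc (∫ t in s..s', ⟪v, deriv γ t⟫ ^ 2) ≤ ∫ t in s..s', 2 * (1 - g t) := step1
      _ = 2 * ((s' - s) - ‖d‖) := step2
  -- assemble
  haveI : Nonempty (Metric.sphere (0 : EuclideanSpace ℝ (Fin r)) 1) :=
    ⟨⟨v, by simpa using hv1⟩⟩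
  set I : ℝ := ∫ t in s..s', ⟪v, deriv γ t⟫ ^ 2 with hI_def
  have hI0 : 0 ≤ I := by
    rw [hI_def]
    exact intervalIntegral.integral_nonneg hss.le (fun t _ => sq_nonneg _)
  set c : ℝ := ⨅ v' : Metric.sphere (0 : EuclideanSpace ℝ (Fin r)) 1,
      Real.sqrt ((s' - s)⁻¹ * ∫ t in s..s',
        (⟪(v' : EuclideanSpace ℝ (Fin r)), deriv γ t⟫) ^ 2) with hc_def
  have hbdd : BddBelow (Set.range fun v' : Metric.sphere (0 : EuclideanSpace ℝ (Fin r)) 1 =>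
      Real.sqrt ((s' - s)⁻¹ * ∫ t in s..s',
        (⟪(v' : EuclideanSpace ℝ (Fin r)), deriv γ t⟫) ^ 2)) := by
    refine ⟨0, ?_⟩
    rintro x ⟨i, rfl⟩
    exact Real.sqrt_nonneg _
  have hc0 : 0 ≤ c := le_ciInf fun i => Real.sqrt_nonneg _
  have hcle : c ≤ Real.sqrt ((s' - s)⁻¹ * I) := by
    rw [hc_def]
    exact ciInf_le hbdd ⟨v, by simpa using hv1⟩
  have hsq : c ^ 2 ≤ (s' - s)⁻¹ * I := by
    have hnn : 0 ≤ (s' - s)⁻¹ * I := by positivity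
    calc c ^ 2 ≤ Real.sqrt ((s' - s)⁻¹ * I) ^ 2 := by
          exact pow_le_pow_left₀ hc0 hcle 2
      _ = (s' - s)⁻¹ * I := Real.sq_sqrt hnn
  calc (s' - s) * c ^ 2 ≤ (s' - s) * ((s' - s)⁻¹ * I) :=
        mul_le_mul_of_nonneg_left hsq hL.le
    _ = I := by field_simp
    _ ≤ 2 * ((s' - s) - ‖d‖) := key
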